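/- arXiv:2006.16702 — 2 statements merged into one kernel-verified Lean document; each statement's English description precedes it below -/
import Mathlib

section
/- With θ ∈ (0, π) and t₀ = ⌊π/(2θ) − 1/2⌋ (the integer making θt₀ + θ/2 closest to π/2 from below), the success amplitude satisfies sin²(θ t₀ + θ/2) ≥ 1 − sin²(θ/2 + θ) ≥ cos²(3θ/2); in particular, as θ → 0 the success probability sin²(θ t₀ + θ/2) tends to 1. Concretely: for all θ ∈ (0, π), |π/2 − (θ t₀ + θ/2)| ≤ θ, hence sin²(θ t₀ + θ/2) ≥ cos² θ. -/
/-- For `θ ∈ (0, π)` and `t₀ = ⌊π/(2θ) − 1/2⌋`, the Grover angle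
`θ t₀ + θ/2` satisfies `|π/2 − (θ t₀ + θ/2)| ≤ θ`, hence the success probability satisfies
`sin²(θ t₀ + θ/2) ≥ cos² θ` (which tends to `1` as `θ → 0`). -/
theorem stmt15 (θ : ℝ) (hθ : 0 < θ) (hθπ : θ < Real.pi)
    (t₀ : ℤ) (ht₀ : t₀ = ⌊Real.pi / (2 * θ) - 1 / 2⌋) :
    |Real.pi / 2 - (θ * t₀ + θ / 2)| ≤ θ ∧
    Real.cos θ ^ 2 ≤ Real.sin (θ * t₀ + θ / 2) ^ 2 := by
  have hx1 : (t₀ : ℝ) ≤ Real.pi / (2 * θ) - 1 / 2 := ht₀ ▸ Int.floor_le _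
  have hx2 : Real.pi / (2 * θ) - 1 / 2 - 1 < (t₀ : ℝ) := by
    rw [ht₀]; linarith [Int.lt_floor_add_one (Real.pi / (2 * θ) - 1 / 2)]
  have key : θ * (Real.pi / (2 * θ)) = Real.pi / 2 := by
    field_simp
  have hup : θ * t₀ + θ / 2 ≤ Real.pi / 2 := by
    have h := mul_le_mul_of_nonneg_left hx1 hθ.le
    rw [mul_sub, key] at h
    linarith
  have hlo : Real.pi / 2 - θ < θ * t₀ + θ / 2 := by
    have h := mul_lt_mul_of_pos_left hx2 hθ
    rw [sub_sub, mul_sub, key] at h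
    nlinarith
  refine ⟨by rw [abs_le]; constructor <;> linarith, ?_⟩
  rcases le_or_gt θ (Real.pi / 2) with hc | hc
  · -- d := π/2 - angle ∈ [0, θ] ⊆ [0, π/2]
    set a := θ * t₀ + θ / 2 with ha
    have hsin : Real.sin a = Real.cos (Real.pi / 2 - a) := by
      rw [Real.cos_pi_div_two_sub]
    have hd0 : 0 ≤ Real.pi / 2 - a := by linarith
    have hdθ : Real.pi / 2 - a ≤ θ := by linarith
    have hcos : Real.cos θ ≤ Real.cos (Real.pi / 2 - a) :=
      Real.cos_le_cos_of_nonneg_of_le_pi hd0 (by linarith) hdθ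
    have hcosθ : 0 ≤ Real.cos θ :=
      Real.cos_nonneg_of_mem_Icc ⟨by linarith, hc⟩
    rw [hsin]
    exact pow_le_pow_left₀ hcosθ hcos 2
  · -- θ > π/2, so t₀ = 0
    have ht0 : t₀ = 0 := by
      rw [ht₀, Int.floor_eq_zero_iff]
      refine Set.mem_Ico.mpr ⟨?_, ?_⟩
      · have : Real.pi / (2 * θ) > 1 / 2 := by
          rw [gt_iff_lt, div_lt_div_iff₀ (by norm_num) (by positivity)]
          linarith
        linarith
      · have : Real.pi / (2 * θ) < 1 := by
          rw [div_lt_one (by positivity)]; linarith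
        linarith
    subst ht0
    simp only [Int.cast_zero, mul_zero, zero_add]
    have hsq : Real.sin (θ / 2) ^ 2 = (1 - Real.cos θ) / 2 := by
      have h2 := Real.cos_two_mul (θ / 2)
      have h := Real.sin_sq_add_cos_sq (θ / 2)
      rw [show 2 * (θ / 2) = θ by ring] at h2
      nlinarith
    rw [hsq]
    have h1 : Real.cos θ ≤ 0 :=
      Real.cos_nonpos_of_pi_div_two_le_of_le hc.le (by linarith [Real.pi_pos])
    have h2 : -1 ≤ Real.cos θ := Real.neg_one_le_cos θ
    nlinarith
end

section
/- Let U be a unitary on a Hilbert space with eigenvector |u⟩, U|u⟩ = e^{2πi·(0.a_m a_{m−1} … a_1)}|u⟩ for binary digits a_j. Applying the controlled operators C_j-U^{2^j} for j = 0,…,m−1 to the state (⊗_{j=1}^m (|0⟩+|1⟩)/√2) ⊗ |u⟩ yields (⊗_{l=1}^m (|0⟩ + e^{2πi·2^{m−l}·φ}|1⟩)/√2) ⊗ |u⟩ where φ = 0.a_m…a_1 = a/2^m, which equals QFT(|a_m…a_1⟩) ⊗ |u⟩; hence applying QFT⁻¹ to the first register yields the basis state |a_m…a_1⟩ ⊗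 |u⟩ exactly. -/
open scoped TensorProduct

/-- Binary encoding of an `m`-bit register basis state, most significant digit first. -/
def enc (m : ℕ) (g : Fin m → Fin 2) : ℕ :=
  ∑ j : Fin m, (g j : ℕ) * 2 ^ (m - 1 - (j : ℕ))

/-- Projection of the `m`-qubit register onto control qubit `j` having value `c`. -/
noncomputable def ctrlProj (m : ℕ) (j : Fin m) (c : Fin 2) :
    ((Fin m → Fin 2) → ℂ) →ₗ[ℂ] ((Fin m → Fin 2) → ℂ) where
  toFun ψ g := if g j = c then ψ g else 0
  map_add' ψ φ := by funext g; by_cases h : g j = c <;> simp [h]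
  map_smul' r ψ := by funext g; by_cases h : g j = c <;> simp [h]

/-- The inverse quantum Fourier transform on the `m`-qubit register,
`QFT⁻¹|a⟩ = (1/√N) Σ_k e^{−2πiak/N}|k⟩`, in the bit-string basis. -/
noncomputable def invQFT (m : ℕ) :
    ((Fin m → Fin 2) → ℂ) →ₗ[ℂ] ((Fin m → Fin 2) → ℂ) where
  toFun ψ g := ((Real.sqrt (2 ^ m) : ℂ))⁻¹ * ∑ g' : Fin m → Fin 2,
      Complex.exp (-(2 * Real.pi * Complex.I * (enc m g) * (enc m g') / (2 ^ m : ℂ))) * ψ g'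
  map_add' ψ φ := by
    funext g
    simp [Pi.add_apply, mul_add, Finset.sum_add_distrib]
  map_smul' r ψ := by
    funext g
    simp only [Pi.smul_apply, smul_eq_mul, RingHom.id_apply]
    rw [Finset.mul_sum, Finset.mul_sum, Finset.mul_sum]
    congr 1
    ext g'
    ring

/-- The controlled `U^{2^{m−1−j}}` operator: it applies `U^{2^{m−1−j}}` to the target
register conditioned on control qubit `j` being `|1⟩` (qubit `j` counted most significant
first, i.e. it is the `(m−1−j)`-th qubit from the bottom, controlling `U^{2^{m−1−j}}`). -/
noncomputable def ctrlU (m : ℕ) {H : Type*} [AddCommGroup H] [Module ℂ H]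
    (U : H →ₗ[ℂ] H) (j : Fin m) :
    Module.End ℂ (TensorProduct ℂ ((Fin m → Fin 2) → ℂ) H) :=
  TensorProduct.map (ctrlProj m j 1) (U ^ (2 ^ (m - 1 - (j : ℕ))))
    + TensorProduct.map (ctrlProj m j 0) LinearMap.id


/- ### Auxiliary lemmas -/

lemma fin2cases (x : Fin 2) : x = 0 ∨ x = 1 := by fin_cases x <;> simp

noncomputable def encEquiv (m : ℕ) : (Fin m → Fin 2) ≃ Fin (2 ^ m) :=
  (Equiv.arrowCongr Fin.revPerm (Equiv.refl (Fin 2))).trans finFunctionFinEquiv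

lemma encEquiv_val (m : ℕ) (g : Fin m → Fin 2) :
    ((encEquiv m g : Fin (2 ^ m)) : ℕ) = enc m g := by
  simp only [encEquiv, Equiv.trans_apply, Equiv.arrowCongr_apply, finFunctionFinEquiv_apply, enc]
  rw [← Equiv.sum_comp (Fin.revPerm : Equiv.Perm (Fin m))
    (fun j : Fin m => (g j : ℕ) * 2 ^ (m - 1 - (j : ℕ)))]
  apply Finset.sum_congr rfl
  intro i _
  have hi := i.isLt
  have he : m - 1 - (m - ((i : ℕ) + 1)) = (i : ℕ) := by omega
  simp [Fin.val_rev, he, Fin.revPerm]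

lemma enc_lt (m : ℕ) (g : Fin m → Fin 2) : enc m g < 2 ^ m := by
  rw [← encEquiv_val]; exact (encEquiv m g).isLt

lemma enc_inj (m : ℕ) : Function.Injective (enc m) := by
  intro g g' h
  apply (encEquiv m).injective
  apply Fin.val_injective
  rw [encEquiv_val, encEquiv_val]; exact h

lemma sum_exp (m x y : ℕ) (hx : x < 2 ^ m) (hy : y < 2 ^ m) :
    ∑ k ∈ Finset.range (2 ^ m),
      Complex.exp ((k : ℂ) * (2 * Real.pi * Complex.I * ((x : ℂ) - (y : ℂ)) / (2 ^ m : ℂ)))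
    = if x = y then (2 ^ m : ℂ) else 0 := by
  have hN : ((2 : ℂ) ^ m) ≠ 0 := pow_ne_zero m two_ne_zero
  have h2pi : (2 * (Real.pi : ℂ) * Complex.I) ≠ 0 := by
    simp [Real.pi_ne_zero, Complex.I_ne_zero]
  set θ : ℂ := 2 * Real.pi * Complex.I * ((x : ℂ) - (y : ℂ)) / (2 ^ m : ℂ) with hθ
  have hterm : ∀ k : ℕ, Complex.exp ((k : ℂ) * θ) = (Complex.exp θ) ^ k := by
    intro k; rw [← Complex.exp_nat_mul]
  simp only [hterm]
  by_cases hxy : x = y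
  · subst hxy
    have hθ0 : Complex.exp θ = 1 := by rw [hθ]; simp
    simp [hθ0]
  · rw [if_neg hxy]
    have hζ : Complex.exp θ ≠ 1 := by
      intro h
      rw [Complex.exp_eq_one_iff] at h
      obtain ⟨n, hn⟩ := h
      rw [hθ, div_eq_iff hN] at hn
      have hn' : ((x : ℂ) - y) = n * 2 ^ m := by
        apply mul_left_cancel₀ h2pi
        rw [hn]; ring
      have hz : (x : ℤ) - y = n * 2 ^ m := by exact_mod_cast hn'
      have hn0 : n = 0 := by nlinarith [hz]
      subst hn0
      simp at hz
      omega
    rw [geom_sum_eq hζ]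
    have hpow : Complex.exp θ ^ (2 ^ m) = 1 := by
      rw [← Complex.exp_nat_mul, hθ]
      have harg : ((2 ^ m : ℕ) : ℂ) * (2 * Real.pi * Complex.I * ((x : ℂ) - y) / (2 ^ m : ℂ))
          = ((((x : ℤ) - (y : ℤ)) : ℤ) : ℂ) * (2 * Real.pi * Complex.I) := by
        push_cast
        field_simp
      rw [harg]
      exact_mod_cast Complex.exp_int_mul_two_pi_mul_I ((x : ℤ) - y)
    rw [hpow]
    simp

lemma pow_eig {H : Type*} [AddCommGroup H] [Module ℂ H] (U : H →ₗ[ℂ] H) (u : H) (c : ℂ)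
    (h : U u = c • u) (n : ℕ) : (U ^ n) u = (c ^ n) • u := by
  induction n with
  | zero => simp
  | succ n ih =>
    rw [pow_succ, Module.End.mul_apply, h, map_smul, ih, smul_smul, pow_succ, mul_comm]

lemma ctrlU_tmul (m : ℕ) {H : Type*} [AddCommGroup H] [Module ℂ H] (U : H →ₗ[ℂ] H)
    (j : Fin m) (F : (Fin m → Fin 2) → ℂ) (u : H) (c : ℂ)
    (h : (U ^ (2 ^ (m - 1 - (j : ℕ)))) u = c • u) :
    ctrlU m U j (F ⊗ₜ[ℂ] u)
      = (fun g => (if g j = 1 then c else 1) * F g) ⊗ₜ[ℂ] u := by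
  simp only [ctrlU, LinearMap.add_apply, TensorProduct.map_tmul, h, LinearMap.id_coe, id_eq]
  rw [TensorProduct.tmul_smul, TensorProduct.smul_tmul', ← TensorProduct.add_tmul]
  congr 1
  funext g
  rcases fin2cases (g j) with hg | hg <;> simp [ctrlProj, hg]

lemma prod_ctrlU_tmul (m : ℕ) {H : Type*} [AddCommGroup H] [Module ℂ H] (U : H →ₗ[ℂ] H)
    (u : H) (c : Fin m → ℂ)
    (h : ∀ j : Fin m, (U ^ (2 ^ (m - 1 - (j : ℕ)))) u = c j • u) :
    ∀ (l : List (Fin m)) (F : (Fin m → Fin 2) → ℂ),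
      ((l.map (ctrlU m U)).prod) (F ⊗ₜ[ℂ] u)
        = (fun g => (l.map (fun j => if g j = 1 then c j else 1)).prod * F g) ⊗ₜ[ℂ] u := by
  intro l
  induction l with
  | nil => intro F; simp
  | cons j l ih =>
    intro F
    simp only [List.map_cons, List.prod_cons, Module.End.mul_apply, ih F,
      ctrlU_tmul m U j _ u (c j) (h j)]
    exact congrArg (fun F => F ⊗ₜ[ℂ] u) (funext fun g => (mul_assoc _ _ _).symm)

lemma phase_prod (m a : ℕ) (g : Fin m → Fin 2) :
    (∏ j : Fin m, (if g j = 1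
        then (Complex.exp (2 * Real.pi * Complex.I * a / (2 ^ m : ℂ))) ^ (2 ^ (m - 1 - (j : ℕ)))
        else 1))
      = Complex.exp (2 * Real.pi * Complex.I * a * (enc m g) / (2 ^ m : ℂ)) := by
  have hterm : ∀ j : Fin m, (if g j = 1
        then (Complex.exp (2 * Real.pi * Complex.I * a / (2 ^ m : ℂ))) ^ (2 ^ (m - 1 - (j : ℕ)))
        else 1)
      = (Complex.exp (2 * Real.pi * Complex.I * a / (2 ^ m : ℂ)))
          ^ ((g j : ℕ) * 2 ^ (m - 1 - (j : ℕ))) := by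
    intro j
    rcases fin2cases (g j) with hg | hg <;> simp [hg]
  simp only [hterm]
  rw [Finset.prod_pow_eq_pow_sum]
  rw [← Complex.exp_nat_mul]
  congr 1
  show ((enc m g : ℕ) : ℂ) * _ = _
  ring

/-- Exact phase estimation. Let `U|u⟩ = e^{2πi a/2^m}|u⟩` with
`a = 0.a_m…a_1 · 2^m` an `m`-binary-digit phase. Applying the controlled powers of `U` to
`(⊗(|0⟩+|1⟩)/√2) ⊗ |u⟩` yields `QFT(|a_m…a_1⟩) ⊗ |u⟩`, whose first-register amplitudes are
`(1/√N) e^{2πi a k/N}`; applying `QFT⁻¹` to the first register then yields exactly the basis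
state `|a_m…a_1⟩ ⊗ |u⟩`. -/
theorem stmt19 (m : ℕ) (a : ℕ) (ha : a < 2 ^ m)
    {H : Type*} [AddCommGroup H] [Module ℂ H]
    (U : H →ₗ[ℂ] H) (u : H) (hu : u ≠ 0)
    (heig : U u = Complex.exp (2 * Real.pi * Complex.I * a / (2 ^ m : ℂ)) • u)
    (b : Fin m → Fin 2) (hb : enc m b = a)
    (ψ₀ : TensorProduct ℂ ((Fin m → Fin 2) → ℂ) H)
    (hψ₀ : ψ₀ = (fun _ : Fin m → Fin 2 => ((Real.sqrt (2 ^ m) : ℂ))⁻¹) ⊗ₜ[ℂ] u) :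
    (List.ofFn fun j : Fin m => ctrlU m U j).prod ψ₀
        = (fun g : Fin m → Fin 2 => ((Real.sqrt (2 ^ m) : ℂ))⁻¹
            * Complex.exp (2 * Real.pi * Complex.I * a * (enc m g) / (2 ^ m : ℂ)))
          ⊗ₜ[ℂ] u ∧
    TensorProduct.map (invQFT m) LinearMap.id
        ((List.ofFn fun j : Fin m => ctrlU m U j).prod ψ₀)
      = (Pi.single b 1 : (Fin m → Fin 2) → ℂ) ⊗ₜ[ℂ] u := by
  subst hψ₀
  have hN : ((2 : ℂ) ^ m) ≠ 0 := pow_ne_zero m two_ne_zero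
  have hc : ∀ j : Fin m, (U ^ (2 ^ (m - 1 - (j : ℕ)))) u
      = ((Complex.exp (2 * Real.pi * Complex.I * a / (2 ^ m : ℂ))) ^ (2 ^ (m - 1 - (j : ℕ)))) • u :=
    fun j => pow_eig U u _ heig _
  have key : (List.ofFn fun j : Fin m => ctrlU m U j).prod
      ((fun _ : Fin m → Fin 2 => ((Real.sqrt (2 ^ m) : ℂ))⁻¹) ⊗ₜ[ℂ] u)
      = (fun g : Fin m → Fin 2 => ((Real.sqrt (2 ^ m) : ℂ))⁻¹
          * Complex.exp (2 * Real.pi * Complex.I * a * (enc m g) / (2 ^ m : ℂ))) ⊗ₜ[ℂ] u := by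
    rw [List.ofFn_eq_map]
    rw [prod_ctrlU_tmul m U u _ hc (List.finRange m) _]
    congr 1
    funext g
    rw [← List.ofFn_eq_map, List.prod_ofFn, phase_prod m a g, mul_comm]
  refine ⟨key, ?_⟩
  rw [key, TensorProduct.map_tmul]
  have hQ : invQFT m (fun g : Fin m → Fin 2 => ((Real.sqrt (2 ^ m) : ℂ))⁻¹
      * Complex.exp (2 * Real.pi * Complex.I * a * (enc m g) / (2 ^ m : ℂ)))
      = (Pi.single b 1 : (Fin m → Fin 2) → ℂ) := by
    funext g
    simp only [invQFT, LinearMap.coe_mk, AddHom.coe_mk]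
    have hsummand : ∀ g' : Fin m → Fin 2,
        Complex.exp (-(2 * Real.pi * Complex.I * (enc m g) * (enc m g') / (2 ^ m : ℂ)))
          * (((Real.sqrt (2 ^ m) : ℂ))⁻¹
            * Complex.exp (2 * Real.pi * Complex.I * a * (enc m g') / (2 ^ m : ℂ)))
        = ((Real.sqrt (2 ^ m) : ℂ))⁻¹ * Complex.exp (((enc m g' : ℕ) : ℂ)
            * (2 * Real.pi * Complex.I * ((a : ℂ) - ((enc m g : ℕ) : ℂ)) / (2 ^ m : ℂ))) := by
      intro g'
      rw [mul_left_comm, ← Complex.exp_add]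
      congr 2
      field_simp
      ring
    simp only [hsummand]
    rw [← Finset.mul_sum]
    have hre : (∑ g' : Fin m → Fin 2, Complex.exp (((enc m g' : ℕ) : ℂ)
          * (2 * Real.pi * Complex.I * ((a : ℂ) - ((enc m g : ℕ) : ℂ)) / (2 ^ m : ℂ))))
        = if a = enc m g then ((2 : ℂ) ^ m) else 0 := by
      have h1 : (∑ g' : Fin m → Fin 2, Complex.exp (((enc m g' : ℕ) : ℂ)
            * (2 * Real.pi * Complex.I * ((a : ℂ) - ((enc m g : ℕ) : ℂ)) / (2 ^ m : ℂ))))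
          = ∑ k : Fin (2 ^ m), Complex.exp (((k : ℕ) : ℂ)
            * (2 * Real.pi * Complex.I * ((a : ℂ) - ((enc m g : ℕ) : ℂ)) / (2 ^ m : ℂ))) := by
        rw [← Equiv.sum_comp (encEquiv m) (fun k : Fin (2 ^ m) => Complex.exp (((k : ℕ) : ℂ)
            * (2 * Real.pi * Complex.I * ((a : ℂ) - ((enc m g : ℕ) : ℂ)) / (2 ^ m : ℂ))))]
        exact Finset.sum_congr rfl fun g' _ => by rw [encEquiv_val]
      rw [h1, Fin.sum_univ_eq_sum_range (fun k : ℕ => Complex.exp ((k : ℂ)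
          * (2 * Real.pi * Complex.I * ((a : ℂ) - ((enc m g : ℕ) : ℂ)) / (2 ^ m : ℂ)))) (2 ^ m)]
      exact sum_exp m a (enc m g) ha (enc_lt m g)
    rw [hre]
    have hcond : (a = enc m g) ↔ (g = b) := by
      constructor
      · intro h
        exact (enc_inj m (by rw [hb, ← h])).symm
      · intro h
        subst h; exact hb.symm
    rw [Pi.single_apply]
    by_cases hgb : g = b
    · rw [if_pos (hcond.mpr hgb), if_pos hgb]
      have hsne : ((Real.sqrt (2 ^ m) : ℝ) : ℂ) ≠ 0 := by
        rw [Complex.ofReal_ne_zero]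
        exact ne_of_gt (Real.sqrt_pos.mpr (by positivity))
      have hs : ((Real.sqrt (2 ^ m) : ℝ) : ℂ) * ((Real.sqrt (2 ^ m) : ℝ) : ℂ) = ((2 : ℂ) ^ m) := by
        rw [← Complex.ofReal_mul, Real.mul_self_sqrt (by positivity)]
        push_cast
        ring
      rw [← hs]
      field_simp
    · rw [if_neg (fun h => hgb (hcond.mp h)), if_neg hgb]
      simp
  rw [hQ]
  simp
end
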